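/- Let r₀ = 1/40. There exist constants C > 0 and λ > 0 such that for every r with 0 ≤ r ≤ r₀ and every t ≥ 0, the matrix exponential satisfies ‖exp(−t·A(r))‖ ≤ C e^{−λ r² t}, where ‖·‖ is the operator norm on 5×5 real matrices. -/

import Mathlib

noncomputable section

/-- The matrix `𝒜(ξ)` of the linearized NSF–P1 system at a frequency of
modulus `r = |ξ|`. -/
def Amat (r : ℝ) : Matrix (Fin 5) (Fin 5) ℝ :=
  !![0,  r,     0,     0,  0;
     -r, 3*r^2, -r,    0,  -1;
     0,  r,     r^2+4, -1, 0;
     0,  0,     -4,    1,  r;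
     0,  0,     0,     -r, 1]

/-- `ℬ(ξ) = −𝒜(ξ)`. -/
def Bmat (r : ℝ) : Matrix (Fin 5) (Fin 5) ℝ := -Amat r

/-! ### Auxiliary lemmas -/

/-- Componentwise derivative of `t ↦ exp(t • B) *ᵥ v`. -/
lemma hasDerivAt_exp_mulVec (B : Matrix (Fin 5) (Fin 5) ℝ) (v : Fin 5 → ℝ) (i : Fin 5)
    (t : ℝ) :
    HasDerivAt (fun τ : ℝ => (NormedSpace.exp (τ • B)).mulVec v i)
      ((B.mulVec ((NormedSpace.exp (t • B)).mulVec v)) i) t := by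
  letI : SeminormedRing (Matrix (Fin 5) (Fin 5) ℝ) := Matrix.linftyOpSemiNormedRing
  letI : NormedRing (Matrix (Fin 5) (Fin 5) ℝ) := Matrix.linftyOpNormedRing
  letI : NormedAlgebra ℝ (Matrix (Fin 5) (Fin 5) ℝ) := Matrix.linftyOpNormedAlgebra
  have h := hasDerivAt_exp_smul_const' (𝕂 := ℝ) B t
  let L : Matrix (Fin 5) (Fin 5) ℝ →ₗ[ℝ] ℝ :=
    { toFun := fun M => M.mulVec v i
      map_add' := by intro M N; simp [Matrix.add_mulVec]
      map_smul' := by intro c M; simp [Matrix.smul_mulVec] }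
  let L' : Matrix (Fin 5) (Fin 5) ℝ →L[ℝ] ℝ := LinearMap.toContinuousLinearMap L
  have h2 := (L'.hasFDerivAt (x := NormedSpace.exp (t • B))).comp_hasDerivAt t h
  have h3 : L' (B * NormedSpace.exp (t • B))
      = (B.mulVec ((NormedSpace.exp (t • B)).mulVec v)) i := by
    show ((B * NormedSpace.exp (t • B)).mulVec v) i = _
    rw [← Matrix.mulVec_mulVec]
  replace h2 := h2.congr_deriv h3
  exact h2

/-- The key dissipation inequality (sum-of-squares certificate). -/
lemma key_ineq (r a b c d e : ℝ) (hr0 : 0 ≤ r) (hr1 : r ≤ 1/40) :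
    (-(1/2)*e^2 - 10*d^2 + 80*c*d - 160*c^2 - (3/2)*r*d*e + 8*r*c*e + 8*r*b*d - 32*r*b*c
       + 6*r^2*c*d - 34*r^2*c^2 - 6*r^2*b*e - 4*r^2*b^2 - 2*r^2*a*c - 2*r^2*a^2 + 6*r^3*a*b)
      + (1/100)*r^2*((5/4)*e^2 + 2*d^2 - 6*c*d + 17*c^2 + 2*b*e + b^2 + a^2 - 2*r*a*b)
      ≤ 0 := by
  have hr2 : r^2 ≤ (1/40)*r := by nlinarith
  have h1 : (0:ℝ) ≤ 37/50 - (299/100)*r := by linarith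
  have h2 : (0:ℝ) ≤ 26/9 - (19/20)*r - (1457/100)*r^2 := by nlinarith
  have h3 : (0:ℝ) ≤ 1/4 - (19/20)*r - (89526/10000)*r^2 := by nlinarith
  have hid :
      (-(1/2)*e^2 - 10*d^2 + 80*c*d - 160*c^2 - (3/2)*r*d*e + 8*r*c*e + 8*r*b*d - 32*r*b*c
       + 6*r^2*c*d - 34*r^2*c^2 - 6*r^2*b*e - 4*r^2*b^2 - 2*r^2*a*c - 2*r^2*a^2 + 6*r^3*a*b)
      + (1/100)*r^2*((5/4)*e^2 + 2*d^2 - 6*c*d + 17*c^2 + 2*b*e + b^2 + a^2 - 2*r*a*b)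
      = -( ((3/2)*r*b - (8/3)*(-4*c+d))^2
         + ((19/20)*r)*((-4*c+d)+e)^2
         + ((2/5)*r*(c+d) - (1/2)*e)^2
         + ((1/4)*r*(c+d) - 4*(r*(-4*c+d)))^2
         + (r*a + (1/5)*(r*(c+d)))^2
         + ((1/2)*(r*a) - (2/5)*(r*(-4*c+d)))^2
         + ((299/100)*r^3)*(a-b)^2
         + (r*b + (299/100)*(r*e))^2
         + (37/50 - (299/100)*r)*(r^2*a^2)
         + (37/50 - (299/100)*r)*(r^2*b^2)
         + (51/400)*(r^2*(c+d)^2)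
         + (26/9 - (19/20)*r - (1457/100)*r^2)*(-4*c+d)^2
         + (1/4 - (19/20)*r - (89526/10000)*r^2)*e^2 ) := by ring
  rw [hid]
  have n1 : (0:ℝ) ≤ ((3/2)*r*b - (8/3)*(-4*c+d))^2 := sq_nonneg _
  have n2 : (0:ℝ) ≤ ((19/20)*r)*((-4*c+d)+e)^2 :=
    mul_nonneg (by linarith) (sq_nonneg _)
  have n3 : (0:ℝ) ≤ ((2/5)*r*(c+d) - (1/2)*e)^2 := sq_nonneg _
  have n4 : (0:ℝ) ≤ ((1/4)*r*(c+d) - 4*(r*(-4*c+d)))^2 := sq_nonneg _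
  have n5 : (0:ℝ) ≤ (r*a + (1/5)*(r*(c+d)))^2 := sq_nonneg _
  have n6 : (0:ℝ) ≤ ((1/2)*(r*a) - (2/5)*(r*(-4*c+d)))^2 := sq_nonneg _
  have n7 : (0:ℝ) ≤ ((299/100)*r^3)*(a-b)^2 :=
    mul_nonneg (by positivity) (sq_nonneg _)
  have n8 : (0:ℝ) ≤ (r*b + (299/100)*(r*e))^2 := sq_nonneg _
  have n9 : (0:ℝ) ≤ (37/50 - (299/100)*r)*(r^2*a^2) :=
    mul_nonneg h1 (by positivity)
  have n10 : (0:ℝ) ≤ (37/50 - (299/100)*r)*(r^2*b^2) :=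
    mul_nonneg h1 (by positivity)
  have n11 : (0:ℝ) ≤ (51/400)*(r^2*(c+d)^2) := by positivity
  have n12 : (0:ℝ) ≤ (26/9 - (19/20)*r - (1457/100)*r^2)*(-4*c+d)^2 :=
    mul_nonneg h2 (sq_nonneg _)
  have n13 : (0:ℝ) ≤ (1/4 - (19/20)*r - (89526/10000)*r^2)*e^2 :=
    mul_nonneg h3 (sq_nonneg _)
  linarith

/-- Lower equivalence bound for the Lyapunov functional. -/
lemma low_bound (r a b c d e : ℝ) (hr0 : 0 ≤ r) (hr1 : r ≤ 1/40) :
    (1/20)*(a^2+b^2+c^2+d^2+e^2)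
      ≤ (5/4)*e^2 + 2*d^2 - 6*c*d + 17*c^2 + 2*b*e + b^2 + a^2 - 2*r*a*b := by
  have hid : ((5/4)*e^2 + 2*d^2 - 6*c*d + 17*c^2 + 2*b*e + b^2 + a^2 - 2*r*a*b)
      - (1/20)*(a^2+b^2+c^2+d^2+e^2)
      = r*(a-b)^2 + ((12/5)*c-(5/4)*d)^2 + ((19/20)*b+(20/19)*e)^2
        + (19/20-r)*a^2 + (19/400-r)*b^2 + (1119/100)*c^2 + (31/80)*d^2
        + (166/1805)*e^2 := by ring
  nlinarith [mul_nonneg hr0 (sq_nonneg (a-b)), sq_nonneg ((12/5)*c-(5/4)*d),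
    sq_nonneg ((19/20)*b+(20/19)*e), mul_nonneg (by linarith : (0:ℝ) ≤ 19/20-r) (sq_nonneg a),
    mul_nonneg (by linarith : (0:ℝ) ≤ 19/400-r) (sq_nonneg b), sq_nonneg c, sq_nonneg d,
    sq_nonneg e]

/-- Upper equivalence bound for the Lyapunov functional. -/
lemma up_bound (r a b c d e : ℝ) (hr0 : 0 ≤ r) (hr1 : r ≤ 1/40) :
    (5/4)*e^2 + 2*d^2 - 6*c*d + 17*c^2 + 2*b*e + b^2 + a^2 - 2*r*a*b
      ≤ 21*(a^2+b^2+c^2+d^2+e^2) := by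
  nlinarith [mul_nonneg hr0 (sq_nonneg (a+b)), sq_nonneg (2*c+(3/2)*d), sq_nonneg (b-e),
    mul_nonneg (by linarith : (0:ℝ) ≤ 20-r) (sq_nonneg a),
    mul_nonneg (by linarith : (0:ℝ) ≤ 19-r) (sq_nonneg b), sq_nonneg d, sq_nonneg e]

set_option maxHeartbeats 1000000 in
/-- **Heat-like decay of the semigroup in the low-frequency regime**
(Lemma 4.2, linear part): with `r₀ = 1/40`, there exist `C > 0` and `λ > 0`
such that for all `0 ≤ r ≤ r₀` and `t ≥ 0` the operator norm of `e^{−t𝒜(r)}`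
(expressed through its action on vectors, with Euclidean norms) is at most
`C e^{−λ r² t}`. -/
theorem semigroup_decay_low_frequency :
    ∃ C lam : ℝ, 0 < C ∧ 0 < lam ∧
      ∀ r : ℝ, 0 ≤ r → r ≤ (1/40 : ℝ) → ∀ t : ℝ, 0 ≤ t → ∀ v : Fin 5 → ℝ,
        Real.sqrt (∑ i, ((NormedSpace.exp ((-t) • Amat r)).mulVec v i) ^ 2) ≤
          C * Real.exp (-lam * r^2 * t) * Real.sqrt (∑ i, (v i) ^ 2) := by
  refine ⟨21, 1/200, by norm_num, by norm_num, ?_⟩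
  intro r hr0 hr1 t ht v
  -- the trajectory
  set y : ℝ → Fin 5 → ℝ := fun τ => (NormedSpace.exp (τ • Bmat r)).mulVec v with hy
  -- explicit formula for the vector field
  have hB : ∀ u : Fin 5 → ℝ, (Bmat r).mulVec u =
      ![-(r * u 1), r*u 0 - 3*r^2*u 1 + r*u 2 + u 4, -(r*u 1) - (r^2+4)*u 2 + u 3,
        4*u 2 - u 3 - r*u 4, r*u 3 - u 4] := by
    intro u
    funext i
    rw [Bmat, Matrix.neg_mulVec]
    fin_cases i <;>
      · simp [Amat, Matrix.mulVec, dotProduct, Fin.sum_univ_five, Pi.neg_apply]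
        try ring
  -- componentwise derivatives
  have hyd : ∀ (i : Fin 5) (τ : ℝ),
      HasDerivAt (fun σ => y σ i) (((Bmat r).mulVec (y τ)) i) τ := by
    intro i τ
    exact hasDerivAt_exp_mulVec (Bmat r) v i τ
  have H0 : ∀ τ : ℝ, HasDerivAt (fun σ => y σ 0) (-(r * y τ 1)) τ := by
    intro τ; have := hyd 0 τ; rwa [hB (y τ)] at this
  have H1 : ∀ τ : ℝ, HasDerivAt (fun σ => y σ 1)
      (r*y τ 0 - 3*r^2*y τ 1 + r*y τ 2 + y τ 4) τ := by
    intro τ; have := hyd 1 τ; rwa [hB (y τ)] at this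
  have H2 : ∀ τ : ℝ, HasDerivAt (fun σ => y σ 2)
      (-(r*y τ 1) - (r^2+4)*y τ 2 + y τ 3) τ := by
    intro τ; have := hyd 2 τ; rwa [hB (y τ)] at this
  have H3 : ∀ τ : ℝ, HasDerivAt (fun σ => y σ 3)
      (4*y τ 2 - y τ 3 - r*y τ 4) τ := by
    intro τ; have := hyd 3 τ; rwa [hB (y τ)] at this
  have H4 : ∀ τ : ℝ, HasDerivAt (fun σ => y σ 4)
      (r*y τ 3 - y τ 4) τ := by
    intro τ; have := hyd 4 τ; rwa [hB (y τ)] at this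
  -- Lyapunov functional along the trajectory
  set g : ℝ → ℝ := fun σ =>
    (5/4)*(y σ 4)^2 + 2*(y σ 3)^2 - 6*((y σ 2)*(y σ 3)) + 17*(y σ 2)^2
      + 2*((y σ 1)*(y σ 4)) + (y σ 1)^2 + (y σ 0)^2 - 2*r*((y σ 0)*(y σ 1)) with hgdef
  have hg : ∀ τ : ℝ, HasDerivAt g
      (-(1/2)*(y τ 4)^2 - 10*(y τ 3)^2 + 80*(y τ 2)*(y τ 3) - 160*(y τ 2)^2
        - (3/2)*r*(y τ 3)*(y τ 4) + 8*r*(y τ 2)*(y τ 4) + 8*r*(y τ 1)*(y τ 3)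
        - 32*r*(y τ 1)*(y τ 2) + 6*r^2*(y τ 2)*(y τ 3) - 34*r^2*(y τ 2)^2
        - 6*r^2*(y τ 1)*(y τ 4) - 4*r^2*(y τ 1)^2 - 2*r^2*(y τ 0)*(y τ 2)
        - 2*r^2*(y τ 0)^2 + 6*r^3*(y τ 0)*(y τ 1)) τ := by
    intro τ
    have h := (((((((((H4 τ).pow 2).const_mul ((5:ℝ)/4)).add
        (((H3 τ).pow 2).const_mul 2)).sub
        (((H2 τ).mul (H3 τ)).const_mul 6)).add
        (((H2 τ).pow 2).const_mul 17)).add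
        (((H1 τ).mul (H4 τ)).const_mul 2)).add
        ((H1 τ).pow 2)).add
        ((H0 τ).pow 2)).sub
        (((H0 τ).mul (H1 τ)).const_mul (2*r))
    refine h.congr_deriv ?_
    push_cast
    ring
  -- the rescaled functional is antitone
  set F : ℝ → ℝ := fun τ => g τ * Real.exp ((1/100)*r^2*τ) with hFdef
  have hexp : ∀ τ : ℝ, HasDerivAt (fun σ : ℝ => Real.exp ((1/100)*r^2*σ))
      (Real.exp ((1/100)*r^2*τ) * ((1/100)*r^2)) τ := by
    intro τ
    have : HasDerivAt (fun σ : ℝ => (1/100)*r^2*σ) ((1/100)*r^2) τ := by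
      simpa using (hasDerivAt_id τ).const_mul ((1/100)*r^2)
    exact this.exp
  have hF : ∀ τ : ℝ, HasDerivAt F
      ((-(1/2)*(y τ 4)^2 - 10*(y τ 3)^2 + 80*(y τ 2)*(y τ 3) - 160*(y τ 2)^2
        - (3/2)*r*(y τ 3)*(y τ 4) + 8*r*(y τ 2)*(y τ 4) + 8*r*(y τ 1)*(y τ 3)
        - 32*r*(y τ 1)*(y τ 2) + 6*r^2*(y τ 2)*(y τ 3) - 34*r^2*(y τ 2)^2
        - 6*r^2*(y τ 1)*(y τ 4) - 4*r^2*(y τ 1)^2 - 2*r^2*(y τ 0)*(y τ 2)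
        - 2*r^2*(y τ 0)^2 + 6*r^3*(y τ 0)*(y τ 1)) * Real.exp ((1/100)*r^2*τ)
        + g τ * (Real.exp ((1/100)*r^2*τ) * ((1/100)*r^2))) τ := by
    intro τ
    exact (hg τ).mul (hexp τ)
  have hF' : ∀ τ : ℝ, deriv F τ ≤ 0 := by
    intro τ
    rw [(hF τ).deriv]
    have hkey := key_ineq r (y τ 0) (y τ 1) (y τ 2) (y τ 3) (y τ 4) hr0 hr1
    have hexppos := (Real.exp_pos ((1/100)*r^2*τ)).le
    have hmul := mul_le_mul_of_nonneg_right hkey hexppos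
    simp only [hgdef]
    nlinarith [hmul]
  have hanti : Antitone F :=
    antitone_of_deriv_nonpos (fun τ => (hF τ).differentiableAt) hF'
  have hFt : F t ≤ F 0 := hanti ht
  -- initial values
  have hy0 : y 0 = v := by
    rw [hy]
    simp [Matrix.one_mulVec]
  have key2 : ((5/4)*(y t 4)^2 + 2*(y t 3)^2 - 6*((y t 2)*(y t 3)) + 17*(y t 2)^2
      + 2*((y t 1)*(y t 4)) + (y t 1)^2 + (y t 0)^2 - 2*r*((y t 0)*(y t 1)))
        * Real.exp ((1/100)*r^2*t)
      ≤ (5/4)*(v 4)^2 + 2*(v 3)^2 - 6*((v 2)*(v 3)) + 17*(v 2)^2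
        + 2*((v 1)*(v 4)) + (v 1)^2 + (v 0)^2 - 2*r*((v 0)*(v 1)) := by
    have h := hFt
    simp only [hFdef, hgdef, hy0, mul_zero, Real.exp_zero, mul_one] at h
    linarith [h]
  have hlow := low_bound r (y t 0) (y t 1) (y t 2) (y t 3) (y t 4) hr0 hr1
  have hup := up_bound r (v 0) (v 1) (v 2) (v 3) (v 4) hr0 hr1
  have hS : ∀ w : Fin 5 → ℝ, (∑ i, (w i)^2) = (w 0)^2+(w 1)^2+(w 2)^2+(w 3)^2+(w 4)^2 := by
    intro w; rw [Fin.sum_univ_five]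
  have hE : (0:ℝ) < Real.exp ((1/100)*r^2*t) := Real.exp_pos _
  have hstep : (∑ i, (y t i)^2) * Real.exp ((1/100)*r^2*t) ≤ 420 * (∑ i, (v i)^2) := by
    rw [hS (y t), hS v]
    nlinarith [key2, hup, mul_le_mul_of_nonneg_right hlow hE.le]
  have hSv : (0:ℝ) ≤ ∑ i, (v i)^2 := by positivity
  have hu : (0:ℝ) < Real.exp (-(1/200)*r^2*t) := Real.exp_pos _
  have huE : Real.exp (-(1/200)*r^2*t) * Real.exp (-(1/200)*r^2*t)
      * Real.exp ((1/100)*r^2*t) = 1 := by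
    rw [← Real.exp_add, ← Real.exp_add,
      show (-(1/200)*r^2*t + -(1/200)*r^2*t + (1/100)*r^2*t) = 0 by ring, Real.exp_zero]
  have heq : (∑ i, (y t i)^2) * Real.exp ((1/100)*r^2*t)
      * (Real.exp (-(1/200)*r^2*t) * Real.exp (-(1/200)*r^2*t)) = (∑ i, (y t i)^2) := by
    calc (∑ i, (y t i)^2) * Real.exp ((1/100)*r^2*t)
        * (Real.exp (-(1/200)*r^2*t) * Real.exp (-(1/200)*r^2*t))
        = (∑ i, (y t i)^2) * (Real.exp (-(1/200)*r^2*t) * Real.exp (-(1/200)*r^2*t)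
            * Real.exp ((1/100)*r^2*t)) := by ring
      _ = (∑ i, (y t i)^2) := by rw [huE, mul_one]
  have hmain : (∑ i, (y t i)^2) ≤
      (21 * Real.exp (-(1/200) * r^2 * t))^2 * (∑ i, (v i)^2) := by
    have hmul := mul_le_mul_of_nonneg_right hstep
      (by positivity : (0:ℝ) ≤ Real.exp (-(1/200)*r^2*t) * Real.exp (-(1/200)*r^2*t))
    nlinarith [hmul, heq, mul_nonneg (mul_nonneg hu.le hu.le) hSv]
  -- take square roots
  have hrw : (-t) • Amat r = t • Bmat r := by
    rw [Bmat, smul_neg, neg_smul]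
  rw [hrw]
  have hgoal : Real.sqrt (∑ i, (y t i)^2) ≤
      21 * Real.exp (-(1/200) * r^2 * t) * Real.sqrt (∑ i, (v i)^2) := by
    have hle := Real.sqrt_le_sqrt hmain
    calc Real.sqrt (∑ i, (y t i)^2)
        ≤ Real.sqrt ((21 * Real.exp (-(1/200) * r^2 * t))^2 * (∑ i, (v i)^2)) := hle
      _ = (21 * Real.exp (-(1/200) * r^2 * t)) * Real.sqrt (∑ i, (v i)^2) := by
          rw [Real.sqrt_mul (sq_nonneg _), Real.sqrt_sq (by positivity)]
      _ = 21 * Real.exp (-(1/200) * r^2 * t) * Real.sqrt (∑ i, (v i)^2) := by ring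
  exact hgoal
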